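/- Let x, y, z be real numbers with x + y + z = 1, xyz ≠ 0, σ := xy + yz + zx ≠ 0, and E(x,y,z) := x²(y+z) + y²(z+x) + z²(x+y) − 2xyz = 0. In ℝ³ define the points P := (x,y,z), G := (1/3,1/3,1/3), P′ := (yz/σ, zx/σ, xy/σ), Q := G − (1/2)(P′ − G), V := 2Q − P, S := (x(y+z)², y(z+x)², z(x+y)²)/(8xyz), and Z := (x(y−z)², y(z−x)², z(x−y)²)/(−4xyz). Then S − G = (5/3)(V − S) and G − Z = (5/4)(V − G); that is, the signed ratios satisfy GS/SV = 5/3 and ZG/GV = 5/4. -/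

import Mathlib

lemma aux0 (x y z : ℝ)
    (h1 : x + y + z = 1) (hx : x ≠ 0) (hy : y ≠ 0) (hz : z ≠ 0)
    (h3 : x * y + y * z + z * x ≠ 0)
    (hE : x ^ 2 * (y + z) + y ^ 2 * (z + x) + z ^ 2 * (x + y) - 2 * x * y * z = 0) :
    x * (y + z) ^ 2 / (8 * x * y * z) - 1/3 = (5/3) * ((1 - y * z / (x * y + y * z + z * x) - x) - (x * (y + z) ^ 2 / (8 * x * y * z))) := by
  generalize hs : x * y + y * z + z * x = s at *
  field_simp
  linear_combination ((8) * z^2 + (8) * y * z + (8) * y^2) * hE + ((-8) * y * z^3 + (-8) * y^2 * z^2 + (-8) * y^3 * z + (-8) * x * z^3 + (24) * x * y * z^2 + (24) * x * y^2 * z + (-8) * x * y^3) * h1 + ((-8) * z^2 + (32) * y * z + (-8) * y^2 + (-40) * x * y * z) * hs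

lemma aux1 (x y z : ℝ)
    (h1 : x + y + z = 1) (hx : x ≠ 0) (hy : y ≠ 0) (hz : z ≠ 0)
    (h3 : x * y + y * z + z * x ≠ 0)
    (hE : x ^ 2 * (y + z) + y ^ 2 * (z + x) + z ^ 2 * (x + y) - 2 * x * y * z = 0) :
    1/3 - (x * (y - z) ^ 2 / (-4 * x * y * z)) = (5/4) * ((1 - y * z / (x * y + y * z + z * x) - x) - 1/3) := by
  generalize hs : x * y + y * z + z * x = s at *
  field_simp
  linear_combination ((3) * z^2 + (3) * y * z + (3) * y^2) * hE + ((-3) * y * z^3 + (-3) * y^2 * z^2 + (-3) * y^3 * z + (-3) * x * z^3 + (9) * x * y * z^2 + (9) * x * y^2 * z + (-3) * x * y^3) * h1 + ((-3) * z^2 + (12) * y * z + (-3) * y^2 + (-15) * x * y * z) * hs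

lemma aux2 (x y z : ℝ)
    (h1 : x + y + z = 1) (hx : x ≠ 0) (hy : y ≠ 0) (hz : z ≠ 0)
    (h3 : x * y + y * z + z * x ≠ 0)
    (hE : x ^ 2 * (y + z) + y ^ 2 * (z + x) + z ^ 2 * (x + y) - 2 * x * y * z = 0) :
    y * (z + x) ^ 2 / (8 * x * y * z) - 1/3 = (5/3) * ((1 - z * x / (x * y + y * z + z * x) - y) - (y * (z + x) ^ 2 / (8 * x * y * z))) := by
  generalize hs : x * y + y * z + z * x = s at *
  field_simp
  linear_combination ((8) + (-8) * z + (8) * z^2 + (-16) * y + (8) * y * z + (8) * y^2) * hE + ((8) * y * z^2 + (-8) * y * z^3 + (8) * y^2 * z + (-8) * y^2 * z^2 + (-8) * y^3 * z + (8) * x * z^2 + (-8) * x * z^3 + (-16) * x * y * z + (24) * x * y * z^2 + (8) * x * y^2 + (24) * x * y^2 * z + (-8) * x * y^3 + (8) * x^2 * z + (8) * x^2 * y) * h1 + ((-8) * z^2 + (32) * x * z + (-40) * x * y * z + (-8) * x^2) * hs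

lemma aux3 (x y z : ℝ)
    (h1 : x + y + z = 1) (hx : x ≠ 0) (hy : y ≠ 0) (hz : z ≠ 0)
    (h3 : x * y + y * z + z * x ≠ 0)
    (hE : x ^ 2 * (y + z) + y ^ 2 * (z + x) + z ^ 2 * (x + y) - 2 * x * y * z = 0) :
    1/3 - (y * (z - x) ^ 2 / (-4 * x * y * z)) = (5/4) * ((1 - z * x / (x * y + y * z + z * x) - y) - 1/3) := by
  generalize hs : x * y + y * z + z * x = s at *
  field_simp
  linear_combination ((3) + (-3) * z + (3) * z^2 + (-6) * y + (3) * y * z + (3) * y^2) * hE + ((3) * y * z^2 + (-3) * y * z^3 + (3) * y^2 * z + (-3) * y^2 * z^2 + (-3) * y^3 * z + (3) * x * z^2 + (-3) * x * z^3 + (-6) * x * y * z + (9) * x * y * z^2 + (3) * x * y^2 + (9) * x * y^2 * z + (-3) * x * y^3 + (3) * x^2 * z + (3) * x^2 * y) * h1 + ((-3) * z^2 + (12) * x * z + (-15) * x * y * z + (-3) * x^2) * hs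

lemma aux4 (x y z : ℝ)
    (h1 : x + y + z = 1) (hx : x ≠ 0) (hy : y ≠ 0) (hz : z ≠ 0)
    (h3 : x * y + y * z + z * x ≠ 0)
    (hE : x ^ 2 * (y + z) + y ^ 2 * (z + x) + z ^ 2 * (x + y) - 2 * x * y * z = 0) :
    z * (x + y) ^ 2 / (8 * x * y * z) - 1/3 = (5/3) * ((1 - x * y / (x * y + y * z + z * x) - z) - (z * (x + y) ^ 2 / (8 * x * y * z))) := by
  generalize hs : x * y + y * z + z * x = s at *
  field_simp
  linear_combination ((8) + (-16) * z + (8) * z^2 + (-8) * y + (8) * y * z + (8) * y^2) * hE + ((8) * y * z^2 + (-8) * y * z^3 + (8) * y^2 * z + (-8) * y^2 * z^2 + (-8) * y^3 * z + (8) * x * z^2 + (-8) * x * z^3 + (-16) * x * y * z + (24) * x * y * z^2 + (8) * x * y^2 + (24) * x * y^2 * z + (-8) * x * y^3 + (8) * x^2 * z + (8) * x^2 * y) * h1 + ((-8) * y^2 + (32) * x * y + (-40) * x * y * z + (-8) * x^2) * hs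

lemma aux5 (x y z : ℝ)
    (h1 : x + y + z = 1) (hx : x ≠ 0) (hy : y ≠ 0) (hz : z ≠ 0)
    (h3 : x * y + y * z + z * x ≠ 0)
    (hE : x ^ 2 * (y + z) + y ^ 2 * (z + x) + z ^ 2 * (x + y) - 2 * x * y * z = 0) :
    1/3 - (z * (x - y) ^ 2 / (-4 * x * y * z)) = (5/4) * ((1 - x * y / (x * y + y * z + z * x) - z) - 1/3) := by
  generalize hs : x * y + y * z + z * x = s at *
  field_simp
  linear_combination ((3) + (-6) * z + (3) * z^2 + (-3) * y + (3) * y * z + (3) * y^2) * hE + ((3) * y * z^2 + (-3) * y * z^3 + (3) * y^2 * z + (-3) * y^2 * z^2 + (-3) * y^3 * z + (3) * x * z^2 + (-3) * x * z^3 + (-6) * x * y * z + (9) * x * y * z^2 + (3) * x * y^2 + (9) * x * y^2 * z + (-3) * x * y^3 + (3) * x^2 * z + (3) * x^2 * y) * h1 + ((-3) * y^2 + (12) * x * y + (-15) * x * y * z + (-3) * x^2) * hs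

/-- Proposition 2.3(3) in barycentric coordinates: if `E(x,y,z) = 0` then the signed
ratios satisfy `GS/SV = 5/3` and `ZG/GV = 5/4`. -/
theorem ratios_GS_SV_and_ZG_GV (x y z : ℝ)
    (h1 : x + y + z = 1) (h2 : x * y * z ≠ 0)
    (h3 : x * y + y * z + z * x ≠ 0)
    (hE : x ^ 2 * (y + z) + y ^ 2 * (z + x) + z ^ 2 * (x + y) - 2 * x * y * z = 0)
    (P G P' Q V S Z : ℝ × ℝ × ℝ)
    (hP : P = (x, y, z))
    (hG : G = (1/3, 1/3, 1/3))
    (hP' : P' = (y * z / (x * y + y * z + z * x), z * x / (x * y + y * z + z * x),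
      x * y / (x * y + y * z + z * x)))
    (hQ : Q = G - (1/2 : ℝ) • (P' - G))
    (hV : V = (2 : ℝ) • Q - P)
    (hS : S = (x * (y + z) ^ 2 / (8 * x * y * z), y * (z + x) ^ 2 / (8 * x * y * z),
      z * (x + y) ^ 2 / (8 * x * y * z)))
    (hZ : Z = (x * (y - z) ^ 2 / (-4 * x * y * z), y * (z - x) ^ 2 / (-4 * x * y * z),
      z * (x - y) ^ 2 / (-4 * x * y * z))) :
    S - G = (5/3 : ℝ) • (V - S) ∧ G - Z = (5/4 : ℝ) • (V - G) := by
  have hx : x ≠ 0 := fun h => h2 (by simp [h])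
  have hy : y ≠ 0 := fun h => h2 (by simp [h])
  have hz : z ≠ 0 := fun h => h2 (by simp [h])
  subst hP hG hP' hQ hV hS hZ
  refine ⟨Prod.ext ?_ (Prod.ext ?_ ?_), Prod.ext ?_ (Prod.ext ?_ ?_)⟩ <;>
    simp only [Prod.fst_sub, Prod.snd_sub, Prod.smul_fst, Prod.smul_snd, Prod.fst_sub,
      Prod.snd_sub, smul_eq_mul, Prod.mk.injEq, Prod.smul_mk, Prod.mk_sub_mk]
  · linear_combination aux0 x y z h1 hx hy hz h3 hE
  · linear_combination aux2 x y z h1 hx hy hz h3 hE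
  · linear_combination aux4 x y z h1 hx hy hz h3 hE
  · linear_combination aux1 x y z h1 hx hy hz h3 hE
  · linear_combination aux3 x y z h1 hx hy hz h3 hE
  · linear_combination aux5 x y z h1 hx hy hz h3 hE
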